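/- (SCL loss lower bound) Under the SCL model with equiprobable classes (λ_y = 1/C), unit-ball representations (‖f(x)‖ ≤ 1), negatives whose labels are sampled uniformly from classes different from the anchor's, common class-conditional distribution s(·|·) for anchor, positive, and negatives, and ψ_k: ℝ^k → ℝ convex and argument-wise non-decreasing, the SCL loss L^{(k)}_{SCL}(f) = E[ψ_k(f(x)^⊤(f(x_1^-)−f(x^+)), ..., f(x)^⊤(f(x_k^-)−f(x^+)))] satisfies L^{(k)}_{SCL}(f) ≥ ψ_k(−C/(C−1), ..., −C/(C−1)) for every measurable f with values in the closed unit ball of ℝ^d. -/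

import Mathlib

open MeasureTheory Finset
open scoped RealInnerProductSpace BigOperators

lemma map_eval_pi' {ι : Type*} [Fintype ι] [DecidableEq ι] {α : ι → Type*} [∀ i, MeasurableSpace (α i)]
    (ν : ∀ i, Measure (α i)) [∀ i, IsProbabilityMeasure (ν i)] (i : ι) :
    (Measure.pi ν).map (Function.eval i) = ν i := by
  ext A hA
  rw [Measure.map_apply (measurable_pi_apply i) hA]
  have h : Function.eval i ⁻¹' A = Set.pi Set.univ (Function.update (fun j => Set.univ) i A) := by
    ext x
    simp only [Set.mem_preimage, Set.mem_pi, Set.mem_univ, forall_true_left]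
    constructor
    · intro hx j
      rcases eq_or_ne j i with rfl | hj
      · simpa using hx
      · simp [Function.update_of_ne hj]
    · intro hx
      have := hx i
      simpa using this
  rw [h, Measure.pi_pi]
  rw [Finset.prod_eq_single i (fun j _ hj => by simp [Function.update_of_ne hj]) (by simp)]
  simp

lemma sum_piFinset_eval {k : ℕ} {C : Type*} [Fintype C] [DecidableEq C]
    (S : Finset C) (i0 : Fin k) (g : C → ℝ) :
    ∑ t ∈ Fintype.piFinset (fun _ : Fin k => S), g (t i0)
      = (S.card : ℝ) ^ (k - 1) * ∑ a ∈ S, g a := by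
  classical
  have h := Finset.prod_univ_sum (fun _ : Fin k => S)
    (fun i a => if i = i0 then g a else (1 : ℝ))
  rw [Finset.prod_eq_mul_prod_sdiff_singleton_of_mem (Finset.mem_univ i0)
    (fun i => ∑ a ∈ S, if i = i0 then g a else (1:ℝ))] at h
  simp only [if_pos rfl] at h
  have h2 : ∀ i ∈ Finset.univ \ {i0}, (∑ a ∈ S, if i = i0 then g a else (1:ℝ)) = (S.card : ℝ) := by
    intro i hi
    simp only [Finset.mem_sdiff, Finset.mem_singleton] at hi
    simp [hi.2]
  rw [Finset.prod_congr rfl h2, Finset.prod_const] at h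
  have hcard : (Finset.univ \ {i0}).card = k - 1 := by
    rw [Finset.card_sdiff_of_subset (by simp)]; simp
  rw [hcard] at h
  have h3 : ∀ t ∈ Fintype.piFinset (fun _ : Fin k => S),
      (∏ i, if i = i0 then g (t i) else (1:ℝ)) = g (t i0) := by
    intro t _
    rw [Finset.prod_eq_single i0 (fun j _ hj => by simp [hj]) (by simp)]
    simp
  rw [Finset.sum_congr rfl h3] at h
  rw [← h]; simp; ring

theorem stmt_8 {k d C : ℕ} (hC : 2 ≤ C) {X : Type*} [MeasurableSpace X]
    (ψ : (Fin k → ℝ) → ℝ) (hconv : ConvexOn ℝ Set.univ ψ) (hmono : Monotone ψ)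
    (s : Fin C → Measure X) [∀ j, IsProbabilityMeasure (s j)]
    (q : Fin C → Measure (X × X)) [∀ j, IsProbabilityMeasure (q j)]
    (hq1 : ∀ j, (q j).map Prod.fst = s j) (hq2 : ∀ j, (q j).map Prod.snd = s j)
    (f : X → EuclideanSpace ℝ (Fin d)) (hf : Measurable f) (hball : ∀ x, ‖f x‖ ≤ 1)
    (hint : ∀ (y : Fin C) (t : Fin k → Fin C),
      Integrable (fun z : (X × X) × (Fin k → X) =>
          ψ fun i => ⟪f z.1.1, f (z.2 i) - f z.1.2⟫)
        ((q y).prod (Measure.pi fun i => s (t i)))) :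
    ((C : ℝ) * ((C : ℝ) - 1) ^ k)⁻¹ *
        ∑ y : Fin C,
          ∑ t ∈ Finset.univ.filter (fun t : Fin k → Fin C => ∀ i, t i ≠ y),
            ∫ z, ψ (fun i => ⟪f z.1.1, f (z.2 i) - f z.1.2⟫)
              ∂((q y).prod (Measure.pi fun i => s (t i)))
      ≥ ψ (fun _ => -(C : ℝ) / ((C : ℝ) - 1)) := by
  classical
  have hC2 : (2:ℝ) ≤ (C:ℝ) := by exact_mod_cast hC
  have hCm1pos : (0:ℝ) < (C:ℝ) - 1 := by linarith
  set μv : Fin C → EuclideanSpace ℝ (Fin d) := fun j => ∫ x, f x ∂(s j) with hμv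
  have hfint : ∀ (ν : Measure X), IsProbabilityMeasure ν → Integrable f ν := by
    intro ν hν
    haveI := hν
    exact ⟨hf.aestronglyMeasurable,
      HasFiniteIntegral.of_bounded (C := 1) (Filter.Eventually.of_forall hball)⟩
  have hμnorm : ∀ j, ‖μv j‖ ≤ 1 := by
    intro j
    have := norm_integral_le_of_norm_le_const (μ := s j) (C := 1) (f := f)
      (Filter.Eventually.of_forall hball)
    simpa using this
  set p : Fin C → ℝ := fun y => ∫ z, ⟪f z.1, f z.2⟫ ∂(q y) with hp
  have hinner_bd : ∀ (a b : X), ‖⟪f a, f b⟫‖ ≤ 1 := by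
    intro a b
    rw [Real.norm_eq_abs]
    calc |⟪f a, f b⟫| ≤ ‖f a‖ * ‖f b‖ := abs_real_inner_le_norm _ _
      _ ≤ 1 := mul_le_one₀ (hball a) (norm_nonneg _) (hball b)
  have hple : ∀ y, p y ≤ 1 := by
    intro y
    have := norm_integral_le_of_norm_le_const (μ := q y) (C := 1)
      (f := fun z : X × X => ⟪f z.1, f z.2⟫)
      (Filter.Eventually.of_forall (fun z => hinner_bd z.1 z.2))
    simp only [measure_univ, ENNReal.toReal_one, probReal_univ, mul_one, Real.norm_eq_abs] at this
    exact (abs_le.mp this).2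
  -- the per-pair key bound
  have key : ∀ (y : Fin C) (t : Fin k → Fin C),
      ψ (fun i => ⟪μv y, μv (t i)⟫ - 1) ≤
        ∫ z, ψ (fun i => ⟪f z.1.1, f (z.2 i) - f z.1.2⟫)
          ∂((q y).prod (Measure.pi fun i => s (t i))) := by
    intro y t
    set π : Measure (Fin k → X) := Measure.pi (fun i => s (t i)) with hπdef
    set m : Measure ((X × X) × (Fin k → X)) := (q y).prod π with hmdef
    haveI : IsProbabilityMeasure π := by rw [hπdef]; infer_instance
    haveI : IsProbabilityMeasure m := by rw [hmdef]; infer_instance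
    set g : (X × X) × (Fin k → X) → (Fin k → ℝ) :=
      fun z => fun i => ⟪f z.1.1, f (z.2 i) - f z.1.2⟫ with hgdef
    have hgmeas : Measurable g := by
      apply measurable_pi_lambda
      intro i
      exact (hf.comp (measurable_fst.comp measurable_fst)).inner
        ((hf.comp ((measurable_pi_apply i).comp measurable_snd)).sub
          (hf.comp (measurable_snd.comp measurable_fst)))
    have hgbd : ∀ z, ‖g z‖ ≤ 2 := by
      intro z
      rw [pi_norm_le_iff_of_nonneg (by norm_num)]
      intro i
      rw [Real.norm_eq_abs]
      calc |g z i| ≤ ‖f z.1.1‖ * ‖f (z.2 i) - f z.1.2‖ := abs_real_inner_le_norm _ _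
        _ ≤ 1 * (‖f (z.2 i)‖ + ‖f z.1.2‖) := by
            apply mul_le_mul (hball _) (norm_sub_le _ _) (norm_nonneg _) zero_le_one
        _ ≤ 1 * (1 + 1) := by
            apply mul_le_mul_of_nonneg_left _ zero_le_one
            exact add_le_add (hball _) (hball _)
        _ = 2 := by norm_num
    have hgint : Integrable g m := ⟨hgmeas.aestronglyMeasurable,
      HasFiniteIntegral.of_bounded (C := 2) (Filter.Eventually.of_forall hgbd)⟩
    have hψg : Integrable (fun z => ψ (g z)) m := hint y t
    have hjensen : ψ (∫ z, g z ∂m) ≤ ∫ z, ψ (g z) ∂m :=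
      hconv.map_integral_le (hconv.continuousOn isOpen_univ) isClosed_univ
        (Filter.Eventually.of_forall (fun z => Set.mem_univ _)) hgint hψg
    -- compute the integral of g
    have hAint : ∀ i : Fin k, Integrable (fun z : (X × X) × (Fin k → X) =>
        ⟪f z.1.1, f (z.2 i)⟫) m := by
      intro i
      refine ⟨((hf.comp (measurable_fst.comp measurable_fst)).inner
        (hf.comp ((measurable_pi_apply i).comp measurable_snd))).aestronglyMeasurable, ?_⟩
      exact HasFiniteIntegral.of_bounded (C := 1)
        (Filter.Eventually.of_forall (fun z => hinner_bd _ _))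
    have hBint : Integrable (fun z : (X × X) × (Fin k → X) =>
        ⟪f z.1.1, f z.1.2⟫) m := by
      refine ⟨((hf.comp (measurable_fst.comp measurable_fst)).inner
        (hf.comp (measurable_snd.comp measurable_fst))).aestronglyMeasurable, ?_⟩
      exact HasFiniteIntegral.of_bounded (C := 1)
        (Filter.Eventually.of_forall (fun z => hinner_bd _ _))
    have hfeval : ∀ i : Fin k, Integrable (fun v : Fin k → X => f (v i)) π := by
      intro i
      refine ⟨(hf.comp (measurable_pi_apply i)).aestronglyMeasurable, ?_⟩
      exact HasFiniteIntegral.of_bounded (C := 1)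
        (Filter.Eventually.of_forall (fun v => hball _))
    have hμeval : ∀ i : Fin k, ∫ v, f (v i) ∂π = μv (t i) := by
      intro i
      show ∫ v, f (v i) ∂π = ∫ x, f x ∂(s (t i))
      rw [← map_eval_pi' (fun i => s (t i)) i,
        integral_map (measurable_pi_apply i).aemeasurable hf.aestronglyMeasurable]
    have hfw1 : Integrable (fun w : X × X => f w.1) (q y) := by
      refine ⟨(hf.comp measurable_fst).aestronglyMeasurable, ?_⟩
      exact HasFiniteIntegral.of_bounded (C := 1)
        (Filter.Eventually.of_forall (fun w => hball _))
    have hw1mean : ∫ w : X × X, f w.1 ∂(q y) = μv y := by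
      show ∫ w : X × X, f w.1 ∂(q y) = ∫ x, f x ∂(s y)
      rw [← hq1 y, integral_map measurable_fst.aemeasurable hf.aestronglyMeasurable]
    have hA : ∀ i : Fin k,
        ∫ z, ⟪f z.1.1, f (z.2 i)⟫ ∂m = ⟪μv y, μv (t i)⟫ := by
      intro i
      rw [hmdef, integral_prod _ (hAint i)]
      have h1 : ∀ w : X × X, ∫ v, ⟪f w.1, f (v i)⟫ ∂π = ⟪f w.1, μv (t i)⟫ := by
        intro w
        rw [← hμeval i, integral_inner (hfeval i)]
      simp_rw [h1]
      have h2 : ∀ w : X × X, ⟪f w.1, μv (t i)⟫ = ⟪μv (t i), f w.1⟫ := fun w =>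
        real_inner_comm _ _
      simp_rw [h2]
      rw [integral_inner hfw1, hw1mean, real_inner_comm]
    have hB : ∫ z, ⟪f z.1.1, f z.1.2⟫ ∂m = p y := by
      rw [hmdef]
      rw [integral_fun_fst (f := fun w : X × X => ⟪f w.1, f w.2⟫)]
      simp [hp]
    have hcomp : (∫ z, g z ∂m) = fun i => ⟪μv y, μv (t i)⟫ - p y := by
      funext i
      have hproj := (ContinuousLinearMap.proj (R := ℝ) (φ := fun _ : Fin k => ℝ)
        i).integral_comp_comm hgint
      have : (∫ z, g z ∂m) i = ∫ z, g z i ∂m := hproj.symm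
      rw [this]
      have hsub : ∀ z : (X × X) × (Fin k → X),
          g z i = ⟪f z.1.1, f (z.2 i)⟫ - ⟪f z.1.1, f z.1.2⟫ := by
        intro z; rw [hgdef]; exact inner_sub_right _ _ _
      simp_rw [hsub]
      rw [integral_sub (hAint i) hBint, hA i, hB]
    have hmle : ψ (fun i => ⟪μv y, μv (t i)⟫ - 1) ≤ ψ (∫ z, g z ∂m) := by
      rw [hcomp]
      apply hmono
      intro i
      simp only
      linarith [hple y]
    exact hmle.trans hjensen
  -- Stage 2: finite Jensen over all (y, t)
  set S : Fin C → Finset (Fin k → Fin C) :=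
    fun y => Finset.univ.filter (fun t => ∀ i, t i ≠ y) with hSdef
  have hSpi : ∀ y, S y = Fintype.piFinset (fun _ : Fin k => Finset.univ.erase y) := by
    intro y
    ext t
    simp [hSdef, Fintype.mem_piFinset]
  have hscard : ∀ y : Fin C, ((Finset.univ.erase y).card : ℝ) = (C:ℝ) - 1 := by
    intro y
    rw [Finset.card_erase_of_mem (Finset.mem_univ y)]
    simp
    rw [Nat.cast_sub (by omega)]
    simp
  have hScard : ∀ y, ((S y).card : ℝ) = ((C:ℝ) - 1) ^ k := by
    intro y
    rw [hSpi y, Fintype.card_piFinset]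
    push_cast
    rw [Finset.prod_const]
    simp only [Finset.card_univ, Fintype.card_fin]
    rw [← hscard y]
  set b : Fin C → (Fin k → Fin C) → (Fin k → ℝ) :=
    fun y t i => ⟪μv y, μv (t i)⟫ - 1 with hbdef
  set N : ℝ := (C:ℝ) * ((C:ℝ) - 1) ^ k with hNdef
  have hNpos : 0 < N := by positivity
  set T : Finset ((_ : Fin C) × (Fin k → Fin C)) := Finset.univ.sigma (fun y => S y) with hTdef
  have hTcard : (T.card : ℝ) = N := by
    rw [hTdef, Finset.card_sigma]
    push_cast
    rw [Finset.sum_congr rfl (fun y _ => hScard y)]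
    rw [Finset.sum_const]
    simp [hNdef, mul_comm]
  have hjf := hconv.map_sum_le (t := T) (w := fun _ => N⁻¹)
    (p := fun σ => b σ.1 σ.2) (fun _ _ => by positivity)
    (by rw [Finset.sum_const, nsmul_eq_mul, hTcard, mul_inv_cancel₀ hNpos.ne'])
    (fun _ _ => Set.mem_univ _)
  -- identify the center of mass componentwise
  set T0 : ℝ := ∑ y : Fin C, ∑ j ∈ Finset.univ.erase y, ⟪μv y, μv j⟫ with hT0def
  have hself : ∀ y : Fin C, ⟪μv y, μv y⟫ ≤ 1 := by
    intro y
    rw [real_inner_self_eq_norm_sq]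
    calc ‖μv y‖ ^ 2 ≤ 1 ^ 2 := by
          apply pow_le_pow_left₀ (norm_nonneg _) (hμnorm y)
      _ = 1 := one_pow 2
  have hT0 : -(C:ℝ) ≤ T0 := by
    have h1 : ∀ y : Fin C, ∑ j ∈ Finset.univ.erase y, ⟪μv y, μv j⟫
        = (∑ j : Fin C, ⟪μv y, μv j⟫) - ⟪μv y, μv y⟫ := by
      intro y
      rw [← Finset.sum_erase_add Finset.univ _ (Finset.mem_univ y)]
      ring
    have h2 : T0 = ⟪∑ y : Fin C, μv y, ∑ j : Fin C, μv j⟫ - ∑ y : Fin C, ⟪μv y, μv y⟫ := by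
      rw [hT0def, Finset.sum_congr rfl (fun y _ => h1 y), Finset.sum_sub_distrib, sum_inner]
      congr 1
      exact Finset.sum_congr rfl (fun y _ => (inner_sum _ _ _).symm)
    have h3 : (0:ℝ) ≤ ⟪∑ y : Fin C, μv y, ∑ j : Fin C, μv j⟫ := real_inner_self_nonneg
    have h4 : ∑ y : Fin C, ⟪μv y, μv y⟫ ≤ (C:ℝ) := by
      calc ∑ y : Fin C, ⟪μv y, μv y⟫ ≤ ∑ _y : Fin C, (1:ℝ) :=
            Finset.sum_le_sum (fun y _ => hself y)
        _ = C := by simp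
    rw [h2] at hT0def ⊢ <;> skip
    linarith [h3, h4, h2 ▸ le_refl T0]
  have hcompsum : ∀ i : Fin k,
      ∑ σ ∈ T, b σ.1 σ.2 i = ((C:ℝ) - 1) ^ (k - 1) * T0 - N := by
    intro i
    rw [hTdef, Finset.sum_sigma]
    have h1 : ∀ y : Fin C, ∑ t ∈ S y, b y t i
        = ((C:ℝ) - 1) ^ (k - 1) * (∑ j ∈ Finset.univ.erase y, ⟪μv y, μv j⟫)
          - ((C:ℝ) - 1) ^ k := by
      intro y
      have he : ∑ t ∈ S y, b y t i
          = (∑ t ∈ S y, ⟪μv y, μv (t i)⟫) - ((S y).card : ℝ) := by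
        rw [hbdef]
        rw [Finset.sum_sub_distrib]
        simp
      rw [he, hScard y]
      congr 1
      rw [hSpi y, sum_piFinset_eval (Finset.univ.erase y) i (fun j => ⟪μv y, μv j⟫),
        hscard y]
    rw [Finset.sum_congr rfl (fun y _ => h1 y), Finset.sum_sub_distrib, Finset.sum_const]
    simp only [Finset.card_univ, Fintype.card_fin, nsmul_eq_mul]
    rw [← Finset.mul_sum, hNdef, ← hT0def]
  have hw : ∀ i : Fin k, -(C:ℝ)/((C:ℝ)-1) ≤ (∑ σ ∈ T, N⁻¹ • b σ.1 σ.2) i := by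
    intro i
    have hsum_apply : (∑ σ ∈ T, N⁻¹ • b σ.1 σ.2) i = N⁻¹ * ∑ σ ∈ T, b σ.1 σ.2 i := by
      rw [Finset.sum_apply, Finset.mul_sum]
      simp
    rw [hsum_apply, hcompsum i]
    have hkpos : 0 < k := i.pos
    have hpow : ((C:ℝ)-1)^(k-1) * ((C:ℝ)-1) = ((C:ℝ)-1)^k := by
      rw [← pow_succ, Nat.sub_add_cancel hkpos]
    have hApos : (0:ℝ) < ((C:ℝ)-1)^(k-1) := by positivity
    have heq : N⁻¹ * (((C:ℝ)-1)^(k-1) * (-(C:ℝ)) - N) = -(C:ℝ)/((C:ℝ)-1) := by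
      rw [hNdef, ← hpow]
      have hCpos : (0:ℝ) < (C:ℝ) := by linarith
      field_simp
      ring
    rw [← heq]
    apply mul_le_mul_of_nonneg_left _ (inv_nonneg.mpr hNpos.le)
    apply sub_le_sub_right
    apply mul_le_mul_of_nonneg_left _ hApos.le
    linarith [hT0]
  have hfinal : ψ (fun _ => -(C:ℝ)/((C:ℝ)-1)) ≤ ψ (∑ σ ∈ T, N⁻¹ • b σ.1 σ.2) :=
    hmono (fun i => hw i)
  rw [ge_iff_le]
  calc ψ (fun _ => -(C:ℝ)/((C:ℝ)-1)) ≤ ∑ σ ∈ T, N⁻¹ • ψ (b σ.1 σ.2) := hfinal.trans hjf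
    _ = N⁻¹ * ∑ σ ∈ T, ψ (b σ.1 σ.2) := by
        rw [Finset.mul_sum]
        simp [smul_eq_mul]
    _ ≤ N⁻¹ * ∑ y : Fin C, ∑ t ∈ S y,
          ∫ z, ψ (fun i => ⟪f z.1.1, f (z.2 i) - f z.1.2⟫)
            ∂((q y).prod (Measure.pi fun i => s (t i))) := by
        apply mul_le_mul_of_nonneg_left _ (inv_nonneg.mpr hNpos.le)
        rw [hTdef, Finset.sum_sigma]
        refine Finset.sum_le_sum (fun y _ => Finset.sum_le_sum (fun t _ => ?_))
        exact key y t
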